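/- Total variation requirement implied by an AUROC target: let M and H be probability measures on a measurable space, and suppose some measurable score function f achieves AUROC(f) ≥ ε for some ε ∈ [1/2, 1], where AUROC(f) = P(f(X) > f(Y)) + (1/2)·P(f(X) = f(Y)) for independent X ~ M and Y ~ H. Then TV(M, H) ≥ 1 − √(2(1 − ε)). -/

import Mathlib

open MeasureTheory

/-- Total variation distance between two measures: the supremum over measurable sets `A`
of `|P(A) − Q(A)|`. -/
noncomputable def tvDist {X : Type*} [MeasurableSpace X] (P Q : Measure X) : ℝ :=
  ⨆ A : {A : Set X // MeasurableSet A}, |(P A.1).toReal - (Q A.1).toReal|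

/-- The AUROC of a score function `f` for distinguishing `M` from `H`: the probability that
an independent sample from `M` receives a strictly higher score than a sample from `H`,
plus half the probability of a tie. -/
noncomputable def auroc {X : Type*} [MeasurableSpace X] (M H : Measure X) (f : X → ℝ) : ℝ :=
  ((M.prod H) {p | f p.1 > f p.2}).toReal
    + (1 / 2) * ((M.prod H) {p | f p.1 = f p.2}).toReal

/-- **Total variation requirement implied by an AUROC target.** Let `M` and `H` be
probability measures, and suppose some measurable score function `f` achieves
`AUROC(f) ≥ ε` for some `ε ∈ [1/2, 1]`.  Then `TV(M, H) ≥ 1 − √(2(1 − ε))`. -/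
theorem tv_ge_of_auroc_ge {X : Type*} [MeasurableSpace X]
    (M H : Measure X) [IsProbabilityMeasure M] [IsProbabilityMeasure H]
    (f : X → ℝ) (hf : Measurable f) (ε : ℝ) (hε₁ : 1 / 2 ≤ ε) (hε₂ : ε ≤ 1)
    (hauroc : ε ≤ auroc M H f) :
    1 - Real.sqrt (2 * (1 - ε)) ≤ tvDist M H := by
  classical
  set ν : Measure X := M + H with hν
  have hMle : M ≤ ν := Measure.le_iff'.mpr fun s => by simp [hν, Measure.add_apply]
  have hHle : H ≤ ν := Measure.le_iff'.mpr fun s => by simp [hν, Measure.add_apply]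
  set p : X → ENNReal := M.rnDeriv ν with hp
  set q : X → ENNReal := H.rnDeriv ν with hq
  have hMeq : ν.withDensity p = M :=
    Measure.withDensity_rnDeriv_eq _ _ (Measure.absolutelyContinuous_of_le hMle)
  have hHeq : ν.withDensity q = H :=
    Measure.withDensity_rnDeriv_eq _ _ (Measure.absolutelyContinuous_of_le hHle)
  set Λ : Measure X := ν.withDensity (fun x => min (p x) (q x)) with hΛdef
  have hΛleM : Λ ≤ M := by
    rw [← hMeq]
    exact withDensity_mono (Filter.Eventually.of_forall fun x => min_le_left _ _)
  have hΛleH : Λ ≤ H := by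
    rw [← hHeq]
    exact withDensity_mono (Filter.Eventually.of_forall fun x => min_le_right _ _)
  have hΛM := Measure.le_iff'.mp hΛleM
  have hΛH := Measure.le_iff'.mp hΛleH
  haveI : IsFiniteMeasure Λ :=
    ⟨lt_of_le_of_lt (hΛM Set.univ) (measure_lt_top M _)⟩
  -- The set where p > q
  set A : Set X := {x | q x < p x} with hAdef
  have hA : MeasurableSet A :=
    measurableSet_lt (Measure.measurable_rnDeriv _ _) (Measure.measurable_rnDeriv _ _)
  have hΛA : Λ A = H A := by
    rw [hΛdef, withDensity_apply _ hA, ← hHeq, withDensity_apply _ hA]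
    exact setLIntegral_congr_fun hA (fun x hx =>
      min_eq_right (le_of_lt hx))
  have hΛAc : Λ Aᶜ = M Aᶜ := by
    rw [hΛdef, withDensity_apply _ hA.compl, ← hMeq, withDensity_apply _ hA.compl]
    exact setLIntegral_congr_fun hA.compl (fun x hx =>
      min_eq_left (not_lt.mp hx))
  have hsum : M A + Λ Set.univ = 1 + H A := by
    have h1 : Λ Set.univ = Λ A + Λ Aᶜ := (measure_add_measure_compl hA).symm
    have h2 : M A + M Aᶜ = 1 := by
      rw [measure_add_measure_compl hA, measure_univ]
    calc M A + Λ Set.univ = M A + (H A + M Aᶜ) := by rw [h1, hΛA, hΛAc]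
      _ = (M A + M Aᶜ) + H A := by ring
      _ = 1 + H A := by rw [h2]
  set l : ℝ := (Λ Set.univ).toReal with hl
  have hl0 : 0 ≤ l := ENNReal.toReal_nonneg
  have hre : (M A).toReal + l = 1 + (H A).toReal := by
    have h := congrArg ENNReal.toReal hsum
    rwa [ENNReal.toReal_add (measure_ne_top M _) (measure_ne_top Λ _),
      ENNReal.toReal_add (by simp) (measure_ne_top H _), ENNReal.toReal_one] at h
  -- total variation lower bound
  have htoReal_le_one : ∀ (μ : Measure X) [IsProbabilityMeasure μ] (s : Set X),
      (μ s).toReal ≤ 1 := by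
    intro μ _ s
    have h := prob_le_one (μ := μ) (s := s)
    have := ENNReal.toReal_mono ENNReal.one_ne_top h
    simpa using this
  have htv : 1 - l ≤ tvDist M H := by
    have hbdd : BddAbove (Set.range fun B : {B : Set X // MeasurableSet B} =>
        |(M B.1).toReal - (H B.1).toReal|) := by
      refine ⟨1, ?_⟩
      rintro x ⟨B, rfl⟩
      have h1 := htoReal_le_one M B.1
      have h2 := htoReal_le_one H B.1
      have h3 : (0:ℝ) ≤ (M B.1).toReal := ENNReal.toReal_nonneg
      have h4 : (0:ℝ) ≤ (H B.1).toReal := ENNReal.toReal_nonneg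
      exact abs_le.mpr ⟨by linarith, by linarith⟩
    have hle : 1 - l ≤ |(M A).toReal - (H A).toReal| := by
      have : (M A).toReal - (H A).toReal = 1 - l := by linarith
      rw [this]
      exact le_abs_self _
    exact hle.trans (le_ciSup hbdd ⟨A, hA⟩)
  -- AUROC upper bound
  set G : Set (X × X) := {z | f z.2 < f z.1} with hGdef
  set L : Set (X × X) := {z | f z.1 < f z.2} with hLdef
  set E : Set (X × X) := {z | f z.1 = f z.2} with hEdef
  have hG : MeasurableSet G := measurableSet_lt (hf.comp measurable_snd) (hf.comp measurable_fst)
  have hL : MeasurableSet L := measurableSet_lt (hf.comp measurable_fst) (hf.comp measurable_snd)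
  have hE : MeasurableSet E := measurableSet_eq_fun (hf.comp measurable_fst) (hf.comp measurable_snd)
  have hpart : ∀ (μ : Measure X) (κ : Measure X) [SFinite μ] [SFinite κ],
      (μ.prod κ) G + (μ.prod κ) L + (μ.prod κ) E = (μ.prod κ) Set.univ := by
    intro μ κ _ _
    have hdisj : Disjoint G L := by
      rw [Set.disjoint_left]
      intro z h1 h2
      simp only [hGdef, hLdef, Set.mem_setOf_eq] at h1 h2
      exact lt_asymm h1 h2
    have hcompl : (G ∪ L)ᶜ = E := by
      ext z
      simp only [hGdef, hLdef, hEdef, Set.mem_compl_iff, Set.mem_union, Set.mem_setOf_eq,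
        not_or, not_lt]
      exact ⟨fun ⟨h1, h2⟩ => le_antisymm h1 h2, fun h => ⟨le_of_eq h, ge_of_eq h⟩⟩
    calc (μ.prod κ) G + (μ.prod κ) L + (μ.prod κ) E
        = (μ.prod κ) (G ∪ L) + (μ.prod κ) (G ∪ L)ᶜ := by
          rw [measure_union hdisj hL, hcompl]
      _ = (μ.prod κ) Set.univ := measure_add_measure_compl (hG.union hL)
  have hmono : ∀ s : Set (X × X), MeasurableSet s → (Λ.prod Λ) s ≤ (M.prod H) s := by
    intro s hs
    rw [Measure.prod_apply hs, Measure.prod_apply hs]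
    exact lintegral_mono' hΛleM fun x => hΛH _
  have hswap : (Λ.prod Λ) L = (Λ.prod Λ) G := by
    have hLG : L = Prod.swap ⁻¹' G := by
      ext z
      simp [hGdef, hLdef, Prod.swap]
    rw [hLG, ← Measure.map_apply measurable_swap hG, Measure.prod_swap]
  have hΛuniv : (Λ.prod Λ) Set.univ = Λ Set.univ * Λ Set.univ := by
    rw [← Set.univ_prod_univ, Measure.prod_prod]
  -- real versions
  set a : ℝ := ((M.prod H) G).toReal with ha
  set b : ℝ := ((M.prod H) L).toReal with hb
  set c : ℝ := ((M.prod H) E).toReal with hc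
  set g : ℝ := ((Λ.prod Λ) G).toReal with hg
  set e : ℝ := ((Λ.prod Λ) E).toReal with he
  have habc : a + b + c = 1 := by
    have h := hpart M H
    rw [measure_univ] at h
    have h' := congrArg ENNReal.toReal h
    rwa [ENNReal.toReal_add (by finiteness) (by finiteness),
      ENNReal.toReal_add (by finiteness) (by finiteness), ENNReal.toReal_one] at h'
  have hge : 2 * g + e = l * l := by
    have h := hpart Λ Λ
    rw [hswap, hΛuniv] at h
    have h' := congrArg ENNReal.toReal h
    rw [ENNReal.toReal_add (by finiteness) (by finiteness),
      ENNReal.toReal_add (by finiteness) (by finiteness), ENNReal.toReal_mul] at h'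
    rw [← hl] at h'
    linarith
  have hbg : g ≤ b := by
    have h := hmono L hL
    rw [hswap] at h
    exact ENNReal.toReal_mono (by finiteness) h
  have hce : e ≤ c := ENNReal.toReal_mono (by finiteness) (hmono E hE)
  have hg0 : 0 ≤ g := ENNReal.toReal_nonneg
  have he0 : 0 ≤ e := ENNReal.toReal_nonneg
  have hauroc' : auroc M H f = a + (1 / 2) * c := rfl
  -- conclude
  have hεl : ε ≤ 1 - l * l / 2 := by
    rw [hauroc'] at hauroc
    nlinarith
  have hlsqrt : l ≤ Real.sqrt (2 * (1 - ε)) := by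
    have h2 : (0:ℝ) ≤ 2 * (1 - ε) := by linarith
    exact (Real.le_sqrt hl0 h2).mpr (by nlinarith)
  linarith
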